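/- arXiv:1705.03714 — 2 statements merged into one kernel-verified Lean document; each statement's English description precedes it below -/
import Mathlib

section
/- If a random variable H ≥ 0 satisfies P(H > r) = O(r^{-θ'}) for some θ' > 0, and C = W·log₂(1 + γ·H²) with W, γ > 0, then C is light-tailed: there exists θ > 0 with P(C > x) = O(e^{-θx}) as x → ∞. -/
open MeasureTheory Filter Real

/-- If a nonnegative random variable `H` has a tail `P(H > r) = O(r ^ (-θ'))` for some
`θ' > 0` (i.e. its distribution is not heavier than fat-tailed), then the instantaneous
capacity `C = W * log₂ (1 + γ * H ^ 2)` is light-tailed: there exist `θ > 0` and `a`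
such that `P(C > x) ≤ a * exp (-θ * x)` for all sufficiently large `x`. -/
theorem instantaneous_capacity_light_tailed
    {Ω : Type*} [MeasurableSpace Ω] (μ : Measure Ω) [IsProbabilityMeasure μ]
    (H : Ω → ℝ) (hH : ∀ ω, 0 ≤ H ω)
    (W γ : ℝ) (hW : 0 < W) (hγ : 0 < γ)
    (C : Ω → ℝ) (hC : ∀ ω, C ω = W * Real.logb 2 (1 + γ * H ω ^ 2))
    (θ' : ℝ) (hθ' : 0 < θ')
    (htail : ∃ M : ℝ, ∀ᶠ r in atTop, (μ {ω | H ω > r}).toReal ≤ M * r ^ (-θ')) :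
    ∃ θ > (0 : ℝ), ∃ a : ℝ,
      ∀ᶠ x in atTop, (μ {ω | C ω > x}).toReal ≤ a * Real.exp (-θ * x) := by
  obtain ⟨M, hM⟩ := htail
  have hlog2 : (0:ℝ) < Real.log 2 := Real.log_pos one_lt_two
  set θ : ℝ := θ' * Real.log 2 / (2 * W) with hθdef
  have hθpos : 0 < θ := by positivity
  refine ⟨θ, hθpos, |M| * (2*γ) ^ (θ'/2), ?_⟩
  set r : ℝ → ℝ := fun x => Real.sqrt (Real.exp (Real.log 2 * x / W) / (2*γ)) with hr
  have hrt : Tendsto r atTop atTop := by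
    have h0 : Tendsto (fun x : ℝ => Real.exp (Real.log 2 * x / W) / (2*γ)) atTop atTop := by
      exact (Real.tendsto_exp_atTop.comp
        ((Tendsto.const_mul_atTop hlog2 tendsto_id).atTop_div_const hW)).atTop_div_const
        (by positivity)
    have h1 : Tendsto (fun y : ℝ => y ^ (1/2 : ℝ)) atTop atTop := tendsto_rpow_atTop (by norm_num)
    exact (h1.comp h0).congr fun x => (Real.sqrt_eq_rpow _).symm
  have h1 : ∀ᶠ x in atTop, (μ {ω | H ω > r x}).toReal ≤ M * (r x) ^ (-θ') := hrt.eventually hM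
  have h3 : ∀ᶠ x in atTop, 0 < r x := hrt.eventually (eventually_gt_atTop 0)
  filter_upwards [h1, h3, eventually_ge_atTop W] with x h1x h3x hxW
  have hsub : {ω | C ω > x} ⊆ {ω | H ω > r x} := by
    intro ω hω
    simp only [Set.mem_setOf_eq] at hω ⊢
    rw [hC ω] at hω
    have hpos : (0:ℝ) < 1 + γ * H ω ^ 2 := by positivity
    have hd : x / W < Real.logb 2 (1 + γ * H ω ^ 2) := by
      rw [div_lt_iff₀ hW]; linarith [hω]
    have h2 : (2:ℝ) ^ (x/W) < 1 + γ * H ω ^ 2 :=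
      (Real.lt_logb_iff_rpow_lt one_lt_two hpos).mp hd
    have h3' : (2:ℝ) ≤ (2:ℝ) ^ (x/W) := by
      calc (2:ℝ) = 2 ^ (1:ℝ) := (Real.rpow_one 2).symm
        _ ≤ 2 ^ (x/W) := Real.rpow_le_rpow_of_exponent_le one_le_two ((one_le_div hW).2 hxW)
    have h4 : (2:ℝ) ^ (x/W) / (2*γ) < H ω ^ 2 := by
      rw [div_lt_iff₀ (by positivity)]; nlinarith
    have hexp : Real.exp (Real.log 2 * x / W) = (2:ℝ) ^ (x/W) := by
      rw [Real.rpow_def_of_pos two_pos, mul_div_assoc]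
    have h4' : Real.exp (Real.log 2 * x / W) / (2*γ) < H ω ^ 2 := by rw [hexp]; exact h4
    have := Real.sqrt_lt_sqrt (by positivity) h4'
    rwa [Real.sqrt_sq (hH ω)] at this
  have key : (r x) ^ (-θ') = (2*γ) ^ (θ'/2) * Real.exp (-θ * x) := by
    have hE : (0:ℝ) ≤ Real.exp (Real.log 2 * x / W) / (2*γ) := by positivity
    show (Real.sqrt (Real.exp (Real.log 2 * x / W) / (2*γ))) ^ (-θ') = _
    rw [Real.sqrt_eq_rpow, ← Real.rpow_mul hE,
      show (1/2 : ℝ) * (-θ') = -(θ'/2) by ring,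
      Real.rpow_neg hE,
      Real.div_rpow (Real.exp_pos _).le (by positivity : (0:ℝ) ≤ 2*γ),
      ← Real.exp_mul, inv_div, div_eq_mul_inv, ← Real.exp_neg,
      show -(Real.log 2 * x / W * (θ'/2)) = -θ * x by rw [hθdef]; field_simp]
  calc (μ {ω | C ω > x}).toReal
      ≤ (μ {ω | H ω > r x}).toReal :=
        ENNReal.toReal_mono (measure_ne_top _ _) (measure_mono hsub)
    _ ≤ M * (r x) ^ (-θ') := h1x
    _ ≤ |M| * (r x) ^ (-θ') :=
        mul_le_mul_of_nonneg_right (le_abs_self M) (Real.rpow_nonneg h3x.le _)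
    _ = |M| * (2*γ) ^ (θ'/2) * Real.exp (-θ * x) := by rw [key]; ring
end

section
/- If X₁, …, X_t are nonnegative random variables (not necessarily independent) with exponentially bounded tails P(X_k > x) ≤ a_k e^{-b_k x} for all x ≥ 0 (a_k ≥ 1, b_k > 0), then their sum S = X₁ + ⋯ + X_t satisfies P(S > x) ≤ (∏_{k=1}^t (a_k b_k w)^{1/(b_k w)})·e^{-x/w} for all x ≥ 0, where w = ∑_{k=1}^t 1/b_k. -/
open MeasureTheory Real Finset

/-- Sum of (possibly dependent) nonnegative random variables with exponentially bounded
tails `P(X k > x) ≤ a k * exp (-b k * x)` (with `a k ≥ 1`, `b k > 0`) satisfies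
`P(∑ X k > x) ≤ (∏ k, (a k * b k * w) ^ (1 / (b k * w))) * exp (-x / w)` where
`w = ∑ k, 1 / b k`. -/
theorem sum_exponential_tail_bound
    {Ω : Type*} [MeasurableSpace Ω] (μ : Measure Ω) [IsProbabilityMeasure μ]
    (t : ℕ) (ht : 0 < t) (X : Fin t → Ω → ℝ)
    (hXnn : ∀ k ω, 0 ≤ X k ω)
    (a b : Fin t → ℝ) (ha : ∀ k, 1 ≤ a k) (hb : ∀ k, 0 < b k)
    (htail : ∀ k, ∀ x : ℝ, 0 ≤ x →
      (μ {ω | X k ω > x}).toReal ≤ a k * Real.exp (-(b k) * x)) :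
    ∀ x : ℝ, 0 ≤ x →
      (μ {ω | ∑ k, X k ω > x}).toReal ≤
        (∏ k, (a k * b k * (∑ j, 1 / b j)) ^ ((1 : ℝ) / (b k * (∑ j, 1 / b j)))) *
          Real.exp (-x / (∑ j, 1 / b j)) := by
  intro x hx
  haveI : Nonempty (Fin t) := Fin.pos_iff_nonempty.mp ht
  set w : ℝ := ∑ j, 1 / b j with hw_def
  have hw : 0 < w := Finset.sum_pos (fun j _ => by have := hb j; positivity) univ_nonempty
  have hA : ∀ k, 0 < a k * b k * w := fun k => by
    have h1 := ha k; have h2 := hb k; positivity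
  set L : ℝ := (∑ k, (1 / b k) * Real.log (a k * b k * w)) / w with hL_def
  set c : Fin t → ℝ := fun k => (1 / b k) * (x / w + Real.log (a k * b k * w) - L)
    with hc_def
  have hsum : ∑ k, c k = x := by
    have h1 : ∀ k : Fin t, c k = (1 / b k) * (x / w)
        + (1 / b k) * Real.log (a k * b k * w) - (1 / b k) * L := by
      intro k; simp only [hc_def]; ring
    simp only [h1]
    rw [Finset.sum_sub_distrib, Finset.sum_add_distrib, ← Finset.sum_mul, ← Finset.sum_mul,
      ← hw_def, hL_def]
    field_simp
    ring
  have hsub : {ω | ∑ k, X k ω > x} ⊆ ⋃ k, {ω | X k ω > c k} := by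
    intro ω hω
    by_contra h
    simp only [Set.mem_iUnion, Set.mem_setOf_eq, not_exists, not_lt] at h
    exact absurd hω (not_lt.mpr (hsum ▸ Finset.sum_le_sum (fun k _ => h k)))
  have hfin : (∑ k, μ {ω | X k ω > c k}) ≠ ⊤ :=
    (ENNReal.sum_lt_top.mpr fun k _ => measure_lt_top μ _).ne
  have hmeas : (μ {ω | ∑ k, X k ω > x}).toReal ≤ ∑ k, (μ {ω | X k ω > c k}).toReal := by
    have h1 : μ {ω | ∑ k, X k ω > x} ≤ ∑ k, μ {ω | X k ω > c k} :=
      le_trans (measure_mono hsub) (measure_iUnion_fintype_le _ _)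
    calc (μ {ω | ∑ k, X k ω > x}).toReal
        ≤ (∑ k, μ {ω | X k ω > c k}).toReal := ENNReal.toReal_mono hfin h1
      _ = ∑ k, (μ {ω | X k ω > c k}).toReal := ENNReal.toReal_sum fun k _ => measure_ne_top μ _
  have hterm : ∀ k : Fin t, (μ {ω | X k ω > c k}).toReal ≤
      1 / (b k * w) * (Real.exp L * Real.exp (-x / w)) := by
    intro k
    have hbk := (hb k).ne'
    have key : a k * Real.exp (-(b k) * c k)
        = 1 / (b k * w) * (Real.exp L * Real.exp (-x / w)) := by
      have he : -(b k) * c k = -x / w + (L - Real.log (a k * b k * w)) := by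
        simp only [hc_def]; field_simp; ring
      have hak : a k ≠ 0 := (lt_of_lt_of_le one_pos (ha k)).ne'
      rw [he, Real.exp_add, Real.exp_sub, Real.exp_log (hA k)]
      field_simp
    rcases le_or_gt 0 (c k) with h | h
    · exact key ▸ htail k _ h
    · have h1 : (μ {ω | X k ω > c k}).toReal ≤ 1 := by
        have := prob_le_one (μ := μ) (s := {ω | X k ω > c k})
        simpa using ENNReal.toReal_mono ENNReal.one_ne_top this
      have h2 : (1 : ℝ) ≤ a k * Real.exp (-(b k) * c k) := by
        have he : (1:ℝ) ≤ Real.exp (-(b k) * c k) := by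
          apply Real.one_le_exp; nlinarith [hb k]
        nlinarith [ha k, Real.exp_pos (-(b k) * c k)]
      calc (μ {ω | X k ω > c k}).toReal ≤ 1 := h1
        _ ≤ a k * Real.exp (-(b k) * c k) := h2
        _ = _ := key
  have hone : ∑ k : Fin t, 1 / (b k * w) = 1 := by
    have h1 : ∑ k : Fin t, 1 / (b k * w) = (∑ k, 1 / b k) / w := by
      rw [Finset.sum_div]
      exact Finset.sum_congr rfl fun k _ => (div_div 1 (b k) w).symm
    rw [h1, ← hw_def]
    exact div_self hw.ne'
  have hsum2 : ∑ k : Fin t, 1 / (b k * w) * (Real.exp L * Real.exp (-x / w))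
      = Real.exp L * Real.exp (-x / w) := by
    rw [← Finset.sum_mul, hone, one_mul]
  have hprod : (∏ k, (a k * b k * w) ^ ((1:ℝ) / (b k * w))) = Real.exp L := by
    have h1 : ∀ k : Fin t, (a k * b k * w) ^ ((1:ℝ) / (b k * w))
        = Real.exp (Real.log (a k * b k * w) * (1 / (b k * w))) := fun k =>
      Real.rpow_def_of_pos (hA k) _
    simp only [h1, ← Real.exp_sum]
    congr 1
    rw [hL_def, Finset.sum_div]
    refine Finset.sum_congr rfl fun k _ => ?_
    have hbk := (hb k).ne'
    field_simp
  calc (μ {ω | ∑ k, X k ω > x}).toReal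
      ≤ ∑ k, (μ {ω | X k ω > c k}).toReal := hmeas
    _ ≤ ∑ k : Fin t, 1 / (b k * w) * (Real.exp L * Real.exp (-x / w)) :=
        Finset.sum_le_sum fun k _ => hterm k
    _ = Real.exp L * Real.exp (-x / w) := hsum2
    _ = _ := by rw [hprod]
end
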